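/- Let p be a prime dividing n, 0 ≤ t ≤ p-1, B_t = {x ∈ {1,ω,...,ω^{p-1}}^n : x_1⋯x_n = ω^t} where ω = e^{2πi/p}, and q ∈ B \ B_t (where B = {1,ω,...,ω^{p-1}}^n). If y is the unique monomial in Sm(≺_deg, B_t ∪ {q}) \ Sm(≺_deg, B_t), then deg(y) ≥ n(p-1)/p. -/

import Mathlib

open MvPolynomial

/-- The set of polynomials vanishing on `S` (the vanishing ideal, as a set). -/
def vanishingOn {σ F : Type*} [CommSemiring F] (S : Set (σ → F)) :
    Set (MvPolynomial σ F) :=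
  {f | ∀ x ∈ S, MvPolynomial.eval x f = 0}

/-- `u` is the leading monomial of `f` with respect to the term order `m`. -/
def IsLeadingMonomial {σ F : Type*} [CommSemiring F] (m : MonomialOrder σ)
    (f : MvPolynomial σ F) (u : σ →₀ ℕ) : Prop :=
  u ∈ f.support ∧ ∀ v ∈ f.support, m.toSyn v ≤ m.toSyn u

/-- `u` is a standard monomial of the vanishing ideal of `S` with respect to `m`. -/
def IsStandard {σ F : Type*} [CommSemiring F] (m : MonomialOrder σ)
    (S : Set (σ → F)) (u : σ →₀ ℕ) : Prop :=
  ¬ ∃ f ∈ vanishingOn S, IsLeadingMonomial m f u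

/-- `m` is the deglex order: `u ≺ v` iff `deg u < deg v`, or the degrees agree and `u` is
lexicographically smaller than `v` (smaller at the first index where they differ,
so that `x_n ≺ … ≺ x_1`). -/
def IsDegLex {n : ℕ} (m : MonomialOrder (Fin n)) : Prop :=
  ∀ u v : Fin n →₀ ℕ,
    (m.toSyn u < m.toSyn v) ↔
      (u.degree < v.degree ∨
        (u.degree = v.degree ∧ ∃ i : Fin n, u i < v i ∧ ∀ j : Fin n, j < i → u j = v j))

namespace Stmt15Aux

lemma degree_eq_sum_univ {n : ℕ} (u : Fin n →₀ ℕ) : u.degree = ∑ i, u i :=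
  Finset.sum_subset (Finset.subset_univ _) fun _ _ hi =>
    Finsupp.notMem_support_iff.mp hi

lemma geom_vanish {p : ℕ} {z : ℂ} (hzp : z ^ p = 1) (hz : z ≠ 1) :
    ∑ k ∈ Finset.range p, z ^ k = 0 := by
  rw [geom_sum_eq hz, hzp, sub_self, zero_div]

lemma pow_mod_p {p : ℕ} {ω : ℂ} (hωp : ω ^ p = 1) (A : ℕ) : ω ^ A = ω ^ (A % p) := by
  conv_lhs => rw [← Nat.div_add_mod A p]
  rw [pow_add, pow_mul, hωp, one_pow, one_mul]

lemma pow_eq_of_mod_eq {p : ℕ} {ω : ℂ} (hωp : ω ^ p = 1) {A B : ℕ} (h : A % p = B % p) :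
    ω ^ A = ω ^ B := by
  rw [pow_mod_p hωp A, pow_mod_p hωp B, h]

lemma char_sum {p : ℕ} (hp : p.Prime) {ω : ℂ} (hω : IsPrimitiveRoot ω p) (A B : ℕ) :
    ∑ k ∈ Finset.range p, (ω ^ A * (ω ^ (p - 1)) ^ B) ^ k
      = if A % p = B % p then (p : ℂ) else 0 := by
  have hz : ω ^ A * (ω ^ (p - 1)) ^ B = ω ^ (A + (p - 1) * B) := by
    rw [pow_add, pow_mul]
  have hzp : (ω ^ A * (ω ^ (p - 1)) ^ B) ^ p = 1 := by
    rw [hz, ← pow_mul, mul_comm, pow_mul, hω.pow_eq_one, one_pow]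
  have hiff : ω ^ A * (ω ^ (p - 1)) ^ B = 1 ↔ A % p = B % p := by
    rw [hz, hω.pow_eq_one_iff_dvd, ← ZMod.natCast_eq_zero_iff,
      ← ZMod.natCast_eq_natCast_iff']
    push_cast [Nat.cast_sub hp.one_le]
    rw [ZMod.natCast_self]
    constructor
    · intro h
      linear_combination h
    · intro h
      linear_combination h
  by_cases h : A % p = B % p
  · rw [if_pos h, hiff.mpr h]
    simp
  · rw [if_neg h]
    exact geom_vanish hzp fun h1 => h (hiff.mp h1)

lemma eval_at_root {p n : ℕ} {ω : ℂ} (g : MvPolynomial (Fin n) ℂ) (a : Fin n → Fin p) :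
    eval (fun i => ω ^ (a i : ℕ)) g
      = ∑ u ∈ g.support, coeff u g * ω ^ (∑ i, u i * (a i : ℕ)) := by
  conv_lhs => rw [← support_sum_monomial_coeff g]
  rw [map_sum]
  refine Finset.sum_congr rfl fun u _ => ?_
  rw [eval_monomial, Finsupp.prod_pow]
  congr 1
  rw [← Finset.prod_pow_eq_pow_sum]
  refine Finset.prod_congr rfl fun i _ => ?_
  rw [← pow_mul, mul_comm (u i)]

/-- Fourier inversion for polynomials with exponents `< p` evaluated at `p`-th roots
of unity. -/
lemma inversion {p n : ℕ} (hp : p.Prime) {ω : ℂ} (hω : IsPrimitiveRoot ω p)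
    (g : MvPolynomial (Fin n) ℂ) (hgs : ∀ u ∈ g.support, ∀ j, u j < p)
    (v : Fin n →₀ ℕ) (hv : ∀ j, v j < p) :
    ∑ a : Fin n → Fin p,
        eval (fun i => ω ^ (a i : ℕ)) g * (ω ^ (p - 1)) ^ (∑ i, v i * (a i : ℕ))
      = (p : ℂ) ^ n * coeff v g := by
  classical
  set ξ := ω ^ (p - 1) with hξ
  have step1 : ∀ a : Fin n → Fin p,
      eval (fun i => ω ^ (a i : ℕ)) g * ξ ^ (∑ i, v i * (a i : ℕ))
        = ∑ u ∈ g.support, coeff u g * ∏ i, (ω ^ u i * ξ ^ v i) ^ (a i : ℕ) := by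
    intro a
    rw [eval_at_root, Finset.sum_mul]
    refine Finset.sum_congr rfl fun u _ => ?_
    rw [mul_assoc]
    congr 1
    rw [← Finset.prod_pow_eq_pow_sum, ← Finset.prod_pow_eq_pow_sum,
      ← Finset.prod_mul_distrib]
    refine Finset.prod_congr rfl fun i _ => ?_
    have h1 : (ω ^ u i) ^ (a i : ℕ) = ω ^ (u i * (a i : ℕ)) := (pow_mul ω (u i) _).symm
    have h2 : (ξ ^ v i) ^ (a i : ℕ) = ξ ^ (v i * (a i : ℕ)) := (pow_mul ξ (v i) _).symm
    rw [mul_pow, h1, h2]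
  calc
    ∑ a : Fin n → Fin p,
        eval (fun i => ω ^ (a i : ℕ)) g * ξ ^ (∑ i, v i * (a i : ℕ))
      = ∑ a : Fin n → Fin p, ∑ u ∈ g.support,
          coeff u g * ∏ i, (ω ^ u i * ξ ^ v i) ^ (a i : ℕ) := by
        exact Finset.sum_congr rfl fun a _ => step1 a
    _ = ∑ u ∈ g.support, ∑ a : Fin n → Fin p,
          coeff u g * ∏ i, (ω ^ u i * ξ ^ v i) ^ (a i : ℕ) := Finset.sum_comm
    _ = ∑ u ∈ g.support, coeff u g * (if u = v then (p : ℂ) ^ n else 0) := by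
        refine Finset.sum_congr rfl fun u hu => ?_
        rw [← Finset.mul_sum]
        congr 1
        have swap : ∑ a : Fin n → Fin p, ∏ i, (ω ^ u i * ξ ^ v i) ^ (a i : ℕ)
            = ∏ i, ∑ j : Fin p, (ω ^ u i * ξ ^ v i) ^ (j : ℕ) :=
          (Fintype.prod_sum fun i (j : Fin p) => (ω ^ u i * ξ ^ v i) ^ (j : ℕ)).symm
        rw [swap]
        have inner : ∀ i, ∑ j : Fin p, (ω ^ u i * ξ ^ v i) ^ (j : ℕ)
            = if u i = v i then (p : ℂ) else 0 := by
          intro i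
          have : ∑ j : Fin p, (ω ^ u i * ξ ^ v i) ^ (j : ℕ)
              = ∑ k ∈ Finset.range p, (ω ^ u i * ξ ^ v i) ^ k :=
            Fin.sum_univ_eq_sum_range (fun k => (ω ^ u i * ξ ^ v i) ^ k) p
          rw [this, hξ, char_sum hp hω]
          congr 1
          rw [Nat.mod_eq_of_lt (hgs u hu i), Nat.mod_eq_of_lt (hv i)]
        rw [Finset.prod_congr rfl fun i _ => inner i]
        by_cases huv : u = v
        · subst huv
          simp
        · obtain ⟨i, hi⟩ : ∃ i, u i ≠ v i := by
            by_contra hc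
            push_neg at hc
            exact huv (Finsupp.ext hc)
          rw [if_neg huv]
          exact Finset.prod_eq_zero (Finset.mem_univ i) (if_neg hi)
    _ = (p : ℂ) ^ n * coeff v g := by
        simp only [mul_ite, mul_zero]
        rw [Finset.sum_ite_eq' g.support v fun u => coeff u g * (p : ℂ) ^ n]
        by_cases hvs : v ∈ g.support
        · rw [if_pos hvs, mul_comm]
        · rw [if_neg hvs, notMem_support_iff.mp hvs, mul_zero]

end Stmt15Aux

open Stmt15Aux in
/-- If `q ∈ B \ B_t` and `y` is the unique monomial in
`Sm(≺_deg, B_t ∪ {q}) \ Sm(≺_deg, B_t)`, then `deg y ≥ n(p-1)/p`. -/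
theorem stmt15 (p n t : ℕ) (hp : p.Prime) (hpn : p ∣ n) (hn : 0 < n) (ht : t ≤ p - 1)
    (m : MonomialOrder (Fin n)) (hm : IsDegLex m)
    (q : Fin n → ℂ) (hq : ∀ i, q i ^ p = 1)
    (hq' : ∏ i, q i ≠ Complex.exp (2 * Real.pi * Complex.I / p) ^ t)
    (y : Fin n →₀ ℕ)
    (hy : IsStandard m
      ({x : Fin n → ℂ | (∀ i, x i ^ p = 1) ∧
        ∏ i, x i = Complex.exp (2 * Real.pi * Complex.I / p) ^ t} ∪ {q}) y)
    (hy' : ¬ IsStandard m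
      {x : Fin n → ℂ | (∀ i, x i ^ p = 1) ∧
        ∏ i, x i = Complex.exp (2 * Real.pi * Complex.I / p) ^ t} y) :
    n * (p - 1) ≤ p * y.degree := by
  classical
  set ω : ℂ := Complex.exp (2 * Real.pi * Complex.I / p) with hωdef
  have hp0 : p ≠ 0 := hp.ne_zero
  have hppos : 0 < p := hp.pos
  have hω : IsPrimitiveRoot ω p := Complex.isPrimitiveRoot_exp p hp0
  have hωp : ω ^ p = 1 := hω.pow_eq_one
  set St : Set (Fin n → ℂ) :=
    {x | (∀ i, x i ^ p = 1) ∧ ∏ i, x i = ω ^ t} with hStdef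
  -- extract the witness polynomial
  obtain ⟨f, hfv, hfy, hfle⟩ :
      ∃ f, f ∈ vanishingOn St ∧ y ∈ f.support ∧ ∀ v ∈ f.support, m.toSyn v ≤ m.toSyn y := by
    obtain ⟨f, h1, h2, h3⟩ := not_not.mp hy'
    exact ⟨f, h1, h2, h3⟩
  -- membership in the union set means being a p-th root vector
  have hmem_pow : ∀ x ∈ St ∪ {q}, ∀ i, x i ^ p = 1 := by
    intro x hx i
    rcases hx with hx | hx
    · exact hx.1 i
    · rw [Set.mem_singleton_iff] at hx
      rw [hx]
      exact hq i
  -- f does not vanish at q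
  have hfq : eval q f ≠ 0 := by
    intro h0
    refine hy ⟨f, ?_, hfy, hfle⟩
    intro x hx
    rcases hx with hx | hx
    · exact hfv x hx
    · rw [Set.mem_singleton_iff] at hx
      rw [hx]
      exact h0
  -- degrees of monomials of f are at most deg y
  have hdegle : ∀ u ∈ f.support, u.degree ≤ y.degree := by
    intro u hu
    by_contra hlt
    push_neg at hlt
    exact absurd (hfle u hu) (not_le.mpr ((hm y u).mpr (Or.inl hlt)))
  -- all exponents of y are < p
  have hylt : ∀ i, y i < p := by
    intro i
    by_contra hge
    push_neg at hge
    set u' : Fin n →₀ ℕ := y - Finsupp.single i p with hu'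
    have happ : ∀ j, u' j = y j - Finsupp.single i p j := fun j =>
      Finsupp.tsub_apply y (Finsupp.single i p) j
    have hadd : ∀ j, u' j + Finsupp.single i p j = y j := by
      intro j
      rw [happ]
      rcases eq_or_ne j i with rfl | hj
      · rw [Finsupp.single_eq_same]
        exact Nat.sub_add_cancel hge
      · rw [Finsupp.single_eq_of_ne' (Ne.symm hj)]
        omega
    have hne : u' ≠ y := by
      intro h
      have := hadd i
      rw [h, Finsupp.single_eq_same] at this
      omega
    set f1 : MvPolynomial (Fin n) ℂ := monomial y 1 - monomial u' 1 with hf1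
    have hcy : coeff y f1 = 1 := by
      rw [hf1, coeff_sub, coeff_monomial, coeff_monomial, if_pos rfl, if_neg hne, sub_zero]
    have hcu : coeff u' f1 = -1 := by
      rw [hf1, coeff_sub, coeff_monomial, coeff_monomial, if_neg (Ne.symm hne),
        if_pos rfl, zero_sub]
    have hsup : f1.support ⊆ {y, u'} := by
      refine subset_trans (support_sub _ _ _) ?_
      intro v hv
      rcases Finset.mem_union.mp hv with hv | hv
      · have := support_monomial_subset hv
        simp only [Finset.mem_singleton] at this
        simp [this]
      · have := support_monomial_subset hv
        simp only [Finset.mem_singleton] at this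
        simp [this]
    have hdeg' : u'.degree < y.degree := by
      rw [degree_eq_sum_univ, degree_eq_sum_univ]
      have h1 : ∑ j, u' j + ∑ j, Finsupp.single i p j = ∑ j, y j := by
        rw [← Finset.sum_add_distrib]
        exact Finset.sum_congr rfl fun j _ => hadd j
      have h2 : ∑ j, Finsupp.single i p j = p := by
        rw [Finset.sum_eq_single i (fun j _ hj => Finsupp.single_eq_of_ne' (Ne.symm hj))
          (fun h => absurd (Finset.mem_univ i) h)]
        exact Finsupp.single_eq_same
      omega
    refine hy ⟨f1, ?_, ?_, ?_⟩
    · intro x hx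
      have hxp := hmem_pow x hx
      have hprod : ∀ (w : Fin n →₀ ℕ), eval x (monomial w (1 : ℂ)) = ∏ j, x j ^ w j := by
        intro w
        rw [eval_monomial, Finsupp.prod_pow, one_mul]
      rw [hf1, map_sub, hprod, hprod]
      have : ∏ j, x j ^ y j = (∏ j, x j ^ u' j) * ∏ j, x j ^ (Finsupp.single i p) j := by
        rw [← Finset.prod_mul_distrib]
        refine Finset.prod_congr rfl fun j _ => ?_
        rw [← pow_add, hadd j]
      rw [this]
      have hsingle : ∏ j, x j ^ (Finsupp.single i p) j = 1 := by
        rw [Finset.prod_eq_single i (fun j _ hj => by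
            rw [Finsupp.single_eq_of_ne' (Ne.symm hj), pow_zero])
          (fun h => absurd (Finset.mem_univ i) h), Finsupp.single_eq_same]
        exact hxp i
      rw [hsingle, mul_one, sub_self]
    · exact mem_support_iff.mpr (by rw [hcy]; exact one_ne_zero)
    · intro v hv
      rcases Finset.mem_insert.mp (hsup hv) with hv' | hv'
      · rw [hv']
      · rw [Finset.mem_singleton] at hv'
        rw [hv']
        exact le_of_lt ((hm u' y).mpr (Or.inl hdeg'))
  -- reduction of f modulo x_i^p - 1
  set red : (Fin n →₀ ℕ) → (Fin n →₀ ℕ) :=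
    fun u => Finsupp.mapRange (· % p) (Nat.zero_mod p) u with hreddef
  have hred_apply : ∀ u j, red u j = u j % p := fun u j => rfl
  set g : MvPolynomial (Fin n) ℂ :=
    ∑ u ∈ f.support, monomial (red u) (coeff u f) with hgdef
  have hcoeffg : ∀ v, coeff v g
      = ∑ u ∈ f.support, if red u = v then coeff u f else 0 := by
    intro v
    rw [hgdef, coeff_sum]
    exact Finset.sum_congr rfl fun u _ => coeff_monomial v (red u) (coeff u f)
  -- g agrees with f on p-th root vectors
  have hgev : ∀ x : Fin n → ℂ, (∀ i, x i ^ p = 1) → eval x g = eval x f := by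
    intro x hx
    conv_rhs => rw [← support_sum_monomial_coeff f]
    rw [hgdef, map_sum, map_sum]
    refine Finset.sum_congr rfl fun u _ => ?_
    rw [eval_monomial, eval_monomial, Finsupp.prod_pow, Finsupp.prod_pow]
    congr 1
    refine Finset.prod_congr rfl fun j _ => ?_
    rw [hred_apply]
    conv_rhs => rw [← Nat.div_add_mod (u j) p]
    rw [pow_add, pow_mul, hx j, one_pow, one_mul]
  -- only y itself reduces to y among monomials of f
  have hredy : ∀ u ∈ f.support, red u = y → u = y := by
    intro u hu hry
    by_contra hne
    have hle : ∀ j, y j ≤ u j := by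
      intro j
      have h3 : u j % p = y j := by rw [← hred_apply, hry]
      calc y j = u j % p := h3.symm
        _ ≤ u j := Nat.mod_le _ _
    have hlt : ∃ j, y j < u j := by
      by_contra hc
      push_neg at hc
      exact hne (Finsupp.ext fun j => le_antisymm (hc j) (hle j))
    obtain ⟨j0, hj0⟩ := hlt
    have : y.degree < u.degree := by
      rw [degree_eq_sum_univ, degree_eq_sum_univ]
      exact Finset.sum_lt_sum (fun j _ => hle j) ⟨j0, Finset.mem_univ j0, hj0⟩
    exact absurd (hdegle u hu) (not_le.mpr this)
  have hredyy : red y = y := by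
    refine Finsupp.ext fun j => ?_
    rw [hred_apply, Nat.mod_eq_of_lt (hylt j)]
  have hgy : coeff y g = coeff y f := by
    rw [hcoeffg]
    rw [Finset.sum_eq_single y]
    · rw [if_pos hredyy]
    · intro u hu hne
      rw [if_neg fun h => hne (hredy u hu h)]
    · intro h
      exact absurd hfy h
  have hgyne : coeff y g ≠ 0 := by
    rw [hgy]
    exact mem_support_iff.mp hfy
  -- support of g : exponents < p and degree ≤ deg y
  have hgsup : ∀ v ∈ g.support, (∀ j, v j < p) ∧ v.degree ≤ y.degree := by
    intro v hv
    have hcv : coeff v g ≠ 0 := mem_support_iff.mp hv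
    rw [hcoeffg] at hcv
    obtain ⟨u, hu, hune⟩ := Finset.exists_ne_zero_of_sum_ne_zero hcv
    have hru : red u = v := by
      by_contra h
      rw [if_neg h] at hune
      exact hune rfl
    constructor
    · intro j
      rw [← hru, hred_apply]
      exact Nat.mod_lt _ hppos
    · have h1 : v.degree ≤ u.degree := by
        rw [degree_eq_sum_univ, degree_eq_sum_univ]
        refine Finset.sum_le_sum fun j _ => ?_
        rw [← hru, hred_apply]
        exact Nat.mod_le _ _
      exact le_trans h1 (hdegle u hu)
  -- the shifted monomials
  set shf : ℕ → (Fin n →₀ ℕ) :=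
    fun k => Finsupp.equivFunOnFinite.symm (fun i => (y i + k) % p) with hshfdef
  have hshf_apply : ∀ k i, shf k i = (y i + k) % p := fun k i => rfl
  have hshf_lt : ∀ k i, shf k i < p := fun k i => Nat.mod_lt _ hppos
  have hshf0 : shf 0 = y := by
    refine Finsupp.ext fun i => ?_
    rw [hshf_apply, Nat.add_zero, Nat.mod_eq_of_lt (hylt i)]
  -- t < p
  have htlt : t < p := lt_of_le_of_lt ht (Nat.sub_lt hppos one_pos)
  -- the key linear relation among coefficients of g on the coset of y
  set ξ : ℂ := ω ^ (p - 1) with hξdef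
  have hξp : ξ ^ p = 1 := by
    rw [hξdef, ← pow_mul, mul_comm, pow_mul, hωp, one_pow]
  have hrel : ∑ k ∈ Finset.range p, ω ^ (t * k) * coeff (shf k) g = 0 := by
    have hpn0 : ((p : ℂ)) ^ n ≠ 0 := pow_ne_zero n (Nat.cast_ne_zero.mpr hp0)
    have hmain : (p : ℂ) ^ n * ∑ k ∈ Finset.range p, ω ^ (t * k) * coeff (shf k) g = 0 := by
      have expand : (p : ℂ) ^ n * ∑ k ∈ Finset.range p, ω ^ (t * k) * coeff (shf k) g
          = ∑ k ∈ Finset.range p, ∑ a : Fin n → Fin p, ω ^ (t * k) *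
                (eval (fun i => ω ^ (a i : ℕ)) g * ξ ^ (∑ i, (shf k) i * (a i : ℕ))) := by
        rw [Finset.mul_sum]
        refine Finset.sum_congr rfl fun k _ => ?_
        rw [← Finset.mul_sum, inversion hp hω g (fun u hu => (hgsup u hu).1) (shf k) (hshf_lt k)]
        ring
      rw [expand, Finset.sum_comm]
      refine Finset.sum_eq_zero fun a _ => ?_
      -- inner sum over k for a fixed point a
      have hterm : ∀ k, ω ^ (t * k) *
            (eval (fun i => ω ^ (a i : ℕ)) g * ξ ^ (∑ i, (shf k) i * (a i : ℕ)))
          = eval (fun i => ω ^ (a i : ℕ)) g *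
              (ξ ^ (∑ i, y i * (a i : ℕ)) * (ω ^ t * ξ ^ (∑ i, (a i : ℕ))) ^ k) := by
        intro k
        have hmod : (∑ i, (shf k) i * (a i : ℕ)) % p
            = (∑ i, y i * (a i : ℕ) + k * ∑ i, (a i : ℕ)) % p := by
          have h2 : (∑ i, (y i + k) * (a i : ℕ))
              = ∑ i, y i * (a i : ℕ) + k * ∑ i, (a i : ℕ) := by
            rw [Finset.mul_sum, ← Finset.sum_add_distrib]
            exact Finset.sum_congr rfl fun i _ => by ring
          rw [← h2, Finset.sum_nat_mod,
            Finset.sum_nat_mod Finset.univ p (fun i => (y i + k) * (a i : ℕ))]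
          congr 1
          refine Finset.sum_congr rfl fun i _ => ?_
          rw [hshf_apply]
          exact Nat.ModEq.mul_right _ (Nat.mod_modEq _ _)
        have hξshift : ξ ^ (∑ i, (shf k) i * (a i : ℕ))
            = ξ ^ (∑ i, y i * (a i : ℕ)) * ξ ^ (k * ∑ i, (a i : ℕ)) := by
          rw [← pow_add]
          exact pow_eq_of_mod_eq hξp hmod
        rw [hξshift]
        have : (ω ^ t * ξ ^ (∑ i, (a i : ℕ))) ^ k
            = ω ^ (t * k) * ξ ^ (k * ∑ i, (a i : ℕ)) := by
          have h1 : (ω ^ t) ^ k = ω ^ (t * k) := (pow_mul ω t k).symm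
          have h2 : (ξ ^ (∑ i, (a i : ℕ))) ^ k = ξ ^ (k * ∑ i, (a i : ℕ)) := by
            rw [← pow_mul ξ (∑ i, (a i : ℕ)) k, mul_comm]
          rw [mul_pow, h1, h2]
        rw [this]
        ring
      rw [Finset.sum_congr rfl fun k _ => hterm k, ← Finset.mul_sum, ← Finset.mul_sum]
      -- two cases according to whether a lies in the hyperplane
      by_cases hcase : t % p = (∑ i, (a i : ℕ)) % p
      · -- the evaluation vanishes since the point is in B_t
        have hpt : (fun i => ω ^ (a i : ℕ)) ∈ St := by
          constructor
          · intro i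
            rw [← pow_mul, mul_comm, pow_mul, hωp, one_pow]
          · rw [Finset.prod_pow_eq_pow_sum]
            exact (pow_eq_of_mod_eq hωp hcase.symm)
        have : eval (fun i => ω ^ (a i : ℕ)) g = 0 := by
          rw [hgev _ hpt.1]
          exact hfv _ hpt
        rw [this, zero_mul]
      · -- the character sum vanishes
        have : ∑ k ∈ Finset.range p, (ω ^ t * ξ ^ (∑ i, (a i : ℕ))) ^ k = 0 := by
          have := char_sum hp hω t (∑ i, (a i : ℕ))
          rw [if_neg hcase] at this
          rw [← hξdef] at this
          exact this
        rw [this, mul_zero, mul_zero]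
    rcases mul_eq_zero.mp hmain with h | h
    · exact absurd h hpn0
    · exact h
  -- extract a second nonzero coefficient
  have h0mem : (0 : ℕ) ∈ Finset.range p := Finset.mem_range.mpr hppos
  have hsplit : ω ^ (t * 0) * coeff (shf 0) g
      + ∑ k ∈ (Finset.range p).erase 0, ω ^ (t * k) * coeff (shf k) g = 0 := by
    have h := Finset.add_sum_erase (Finset.range p)
      (fun k => ω ^ (t * k) * coeff (shf k) g) h0mem
    simpa using h.trans hrel
  have hrest : ∑ k ∈ (Finset.range p).erase 0, ω ^ (t * k) * coeff (shf k) g ≠ 0 := by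
    intro h
    rw [h, add_zero, Nat.mul_zero, pow_zero, one_mul, hshf0] at hsplit
    exact hgyne hsplit
  obtain ⟨d, hdmem, hdne⟩ := Finset.exists_ne_zero_of_sum_ne_zero hrest
  have hd0 : d ≠ 0 := Finset.ne_of_mem_erase hdmem
  have hdp : d < p := Finset.mem_range.mp (Finset.mem_of_mem_erase hdmem)
  have hcd : coeff (shf d) g ≠ 0 := fun h => hdne (by rw [h, mul_zero])
  have hdsup : shf d ∈ g.support := mem_support_iff.mpr hcd
  have hddeg : (shf d).degree ≤ y.degree := (hgsup _ hdsup).2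
  -- final counting argument
  set S : Finset (Fin n) := Finset.univ.filter fun i => p ≤ y i + d with hSdef
  set s : ℕ := S.card with hsdef
  have hcoord : ∀ i, y i + d = (y i + d) % p + p * (if p ≤ y i + d then 1 else 0) := by
    intro i
    have hlt2 : y i + d < 2 * p := by
      have := hylt i
      omega
    by_cases hc : p ≤ y i + d
    · rw [if_pos hc, mul_one]
      have : (y i + d) % p = y i + d - p := by
        rw [Nat.mod_eq_sub_mod hc, Nat.mod_eq_of_lt (by omega)]
      omega
    · rw [if_neg hc, Nat.mul_zero, Nat.add_zero, Nat.mod_eq_of_lt (by omega)]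
  have hsum1 : y.degree + n * d = (shf d).degree + p * s := by
    have lhs_eq : y.degree + n * d = ∑ i, (y i + d) := by
      rw [degree_eq_sum_univ, Finset.sum_add_distrib, Finset.sum_const,
        Finset.card_univ, Fintype.card_fin, smul_eq_mul]
    have rhs_eq : ∑ i, (y i + d)
        = (shf d).degree + p * s := by
      have e1 : ∑ i, ((y i + d) % p) = (shf d).degree := by
        rw [degree_eq_sum_univ]
        exact Finset.sum_congr rfl fun i _ => (hshf_apply d i).symm
      have e2 : (∑ i : Fin n, p * (if p ≤ y i + d then 1 else 0)) = p * s := by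
        rw [← Finset.mul_sum, hsdef, hSdef]
        simp [Finset.sum_boole]
      rw [Finset.sum_congr rfl fun i _ => hcoord i, Finset.sum_add_distrib, e1, e2]
    omega
  have hnd_le : n * d ≤ p * s := by omega
  have hlow : s * (p - d) ≤ y.degree := by
    have h1 : ∀ i ∈ S, p - d ≤ y i := by
      intro i hi
      have h2 := (Finset.mem_filter.mp hi).2
      omega
    calc s * (p - d) = ∑ _i ∈ S, (p - d) := by rw [Finset.sum_const, smul_eq_mul]
      _ ≤ ∑ i ∈ S, y i := Finset.sum_le_sum h1
      _ ≤ ∑ i, y i := Finset.sum_le_sum_of_subset (Finset.filter_subset _ _)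
      _ = y.degree := (degree_eq_sum_univ y).symm
  have key : p - 1 ≤ d * (p - d) := by
    obtain ⟨d', rfl⟩ : ∃ d', d = d' + 1 := ⟨d - 1, by omega⟩
    obtain ⟨e', he'⟩ : ∃ e', p - (d' + 1) = e' + 1 := ⟨p - (d' + 1) - 1, by omega⟩
    rw [he']
    have hexp : (d' + 1) * (e' + 1) = d' * e' + (d' + e' + 1) := by ring
    omega
  calc n * (p - 1) ≤ n * (d * (p - d)) := Nat.mul_le_mul_left n key
    _ = (n * d) * (p - d) := by ring
    _ ≤ (p * s) * (p - d) := Nat.mul_le_mul_right _ hnd_le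
    _ = p * (s * (p - d)) := by ring
    _ ≤ p * y.degree := Nat.mul_le_mul_left p hlow
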